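/- Let R be a commutative (possibly non-unital) ring such that any product of n+1 elements of R is zero, let m ∈ ℤ and a, b ∈ R. If (a − b)·T_n(b) = m^n·h for some h ∈ R, where T_n(b) = Σ_{k=1}^{n} (-1)^{k-1} m^{n-k} b^{k-1}, then m^n·(a − b − m·h − b·h) = 0. -/

import Mathlib

/-- Iterated multiplication: `mulPow x b j = x * b^j` in a non-unital ring. -/
def mulPow {R : Type*} [NonUnitalCommRing R] (x b : R) : ℕ → R
  | 0 => x
  | j + 1 => mulPow x b j * b

lemma mulPow_shift {R : Type*} [NonUnitalCommRing R] (x b : R) (j : ℕ) :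
    mulPow (x * b) b j = mulPow x b (j + 1) := by
  induction j with
  | zero => rfl
  | succ j ih => show mulPow (x * b) b j * b = mulPow x b (j + 1) * b; rw [ih]

lemma mulPow_eq_foldl {R : Type*} [NonUnitalCommRing R] (x b : R) (j : ℕ) :
    mulPow x b j = (List.replicate j b).foldl (· * ·) x := by
  induction j generalizing x with
  | zero => rfl
  | succ j ih =>
    rw [List.replicate_succ, List.foldl_cons, ← ih, mulPow_shift]

/-- In a commutative non-unital ring where every product of `n+1` elements
vanishes, if `(a-b)·T_n(b) = m^n·h` for some `h`, with
`T_n(b) = ∑_{k=1}^n (-1)^{k-1} m^{n-k} b^{k-1}`, then `m^n·(a - b - m·h - b·h) = 0`. -/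
theorem stmt2 (R : Type*) [NonUnitalCommRing R] (n : ℕ) (hn : 1 ≤ n)
    (hnil : ∀ (x : R) (l : List R), l.length = n → l.foldl (· * ·) x = 0)
    (m : ℤ) (a b h : R)
    (hT : ∑ k ∈ Finset.Icc 1 n, ((-1 : ℤ) ^ (k - 1) * m ^ (n - k)) • mulPow (a - b) b (k - 1)
      = (m ^ n) • h) :
    (m ^ n) • (a - b - m • h - b * h) = 0 := by
  set c := a - b with hc
  have hbn : mulPow c b n = 0 := by
    rw [mulPow_eq_foldl]
    exact hnil c _ (List.length_replicate (n := n) (a := b))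
  rw [← Finset.Ico_add_one_right_eq_Icc, Finset.sum_Ico_eq_sum_range] at hT
  simp only [Nat.add_sub_cancel, Nat.add_sub_cancel_left, Nat.succ_sub_one] at hT
  have key : m • ((m ^ n) • h) + b * ((m ^ n) • h) = (m ^ n) • c := by
    rw [← hT, Finset.smul_sum, Finset.mul_sum, ← Finset.sum_add_distrib]
    have step : ∀ i ∈ Finset.range n,
        m • (((-1 : ℤ) ^ i * m ^ (n - (1 + i))) • mulPow c b i)
          + b * (((-1 : ℤ) ^ i * m ^ (n - (1 + i))) • mulPow c b i)
        = (fun i => ((-1 : ℤ) ^ i * m ^ (n - i)) • mulPow c b i) i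
          - (fun i => ((-1 : ℤ) ^ i * m ^ (n - i)) • mulPow c b i) (i + 1) := by
      intro i hi
      have hi' : i < n := Finset.mem_range.mp hi
      have h1 : m * ((-1 : ℤ) ^ i * m ^ (n - (1 + i))) = (-1 : ℤ) ^ i * m ^ (n - i) := by
        have he : n - i = n - (1 + i) + 1 := by omega
        rw [he, pow_succ]; ring
      have h2 : -((-1 : ℤ) ^ (i + 1) * m ^ (n - (i + 1))) = (-1 : ℤ) ^ i * m ^ (n - (1 + i)) := by
        have he : n - (i + 1) = n - (1 + i) := by omega
        rw [he, pow_succ]; ring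
      simp only
      rw [smul_smul, h1, mul_smul_comm, sub_eq_add_neg, ← neg_smul, h2]
      congr 1
      congr 1
      rw [mul_comm]
      rfl
    rw [Finset.sum_congr rfl step, Finset.sum_range_sub']
    simp [hbn, mulPow]
  have e1 : (m ^ n) • (m • h) = m • ((m ^ n) • h) := smul_comm _ _ _
  have e2 : (m ^ n) • (b * h) = b * ((m ^ n) • h) := (mul_smul_comm _ _ _).symm
  rw [smul_sub, smul_sub, e1, e2, ← key]
  abel
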